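/- Let M ∈ ℝ^{n×n} be any symmetric matrix and let X_M maximize ⟨M,X⟩ over the feasible set F. Let Q ∈ ℝ^{n×n} be a reference matrix such that Q_{ij} = β_k^{in} for all i,j ∈ C_k (for each k), and 0 ≤ Q_{ij} ≤ β_k^{out} for all i ∈ C_k, j ∈ C_ℓ with k ≠ ℓ. If min_k (β_k^{in} − β_k^{out}) ≥ 0, then m_min · min_k (β_k^{in} − β_k^{out}) · ‖X_M − X₀‖_F² ≤ 2 ⟨M − Q, X_M − X₀⟩. -/

import Mathlib

open Matrix

noncomputable section

/-- The size `m_k` of cluster `C_k = {i : z i = k}` of the partition given by `z`. -/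
def clusterSize {n r : ℕ} (z : Fin n → Fin r) (k : Fin r) : ℕ :=
  (Finset.univ.filter fun i => z i = k).card

/-- The smallest cluster size `m_min`. -/
def mMin {n r : ℕ} [NeZero r] (z : Fin n → Fin r) : ℕ :=
  Finset.univ.inf' Finset.univ_nonempty (clusterSize z)

/-- The largest cluster size `m_max`. -/
def mMax {n r : ℕ} [NeZero r] (z : Fin n → Fin r) : ℕ :=
  Finset.univ.sup' Finset.univ_nonempty (clusterSize z)

/-- The ground-truth clustering matrix `X₀`, `(X₀)_{ij} = 1/m_k` if `i,j ∈ C_k`, else `0`. -/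
def groundTruth {n r : ℕ} (z : Fin n → Fin r) : Matrix (Fin n) (Fin n) ℝ :=
  Matrix.of fun i j => if z i = z j then ((clusterSize z (z i) : ℝ))⁻¹ else 0

/-- Trace inner product `⟨A, B⟩ = trace (Aᵀ B) = ∑_{ij} A_{ij} B_{ij}`. -/
def ip {n : ℕ} (A B : Matrix (Fin n) (Fin n) ℝ) : ℝ := ∑ i, ∑ j, A i j * B i j

/-- Squared Frobenius norm `‖A‖_F²`. -/
def frobSq {m k : ℕ} (A : Matrix (Fin m) (Fin k) ℝ) : ℝ := ∑ i, ∑ j, (A i j) ^ 2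

/-- The feasible set `F` of the SDP: `X ⪰ 0`, `0 ≤ X_{ij} ≤ 1/m_min`, all row sums `1`,
`trace X = r`. -/
def feasSet {n r : ℕ} [NeZero r] (z : Fin n → Fin r) (X : Matrix (Fin n) (Fin n) ℝ) : Prop :=
  X.PosSemidef ∧ (∀ i j, 0 ≤ X i j) ∧ (∀ i j, X i j ≤ ((mMin z : ℝ))⁻¹) ∧
    (∀ i, ∑ j, X i j = 1) ∧ X.trace = (r : ℝ)

/-- Minimum of a real-valued function over the (nonempty) index set `Fin r`. -/
def rMin {r : ℕ} [NeZero r] (f : Fin r → ℝ) : ℝ :=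
  Finset.univ.inf' Finset.univ_nonempty f

/-- **Lemma 1.** If `X_M` maximizes `⟨M, X⟩` over the feasible set `F` and `Q`
is a reference matrix that equals `β_k^{in}` on the diagonal block of cluster `k` and whose
off-diagonal-block entries in row-block `k` lie in `[0, β_k^{out}]`, with
`min_k (β_k^{in} − β_k^{out}) ≥ 0`, then
`m_min · min_k (β_k^{in} − β_k^{out}) · ‖X_M − X₀‖_F² ≤ 2 ⟨M − Q, X_M − X₀⟩`. -/
-- helper: conditional sums as filtered sums
lemma sum_if_eq' {n r : ℕ} (z : Fin n → Fin r) (i : Fin n) (g : Fin n → ℝ) :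
    ∑ j, (if z i = z j then g j else 0) = ∑ j ∈ Finset.univ.filter fun j => z j = z i, g j := by
  rw [Finset.sum_filter]
  refine Finset.sum_congr rfl fun j _ => ?_
  by_cases h : z i = z j
  · simp [h]
  · simp [if_neg h, if_neg (fun hh : z j = z i => h hh.symm)]

lemma psd_two_mul {n : ℕ} {X : Matrix (Fin n) (Fin n) ℝ} (hX : X.PosSemidef) (i j : Fin n) :
    2 * X i j ≤ X i i + X j j := by
  have hsym : X j i = X i j := by
    have := congrFun (congrFun hX.1 i) j
    simpa [Matrix.conjTranspose_apply] using this
  have h := hX.dotProduct_mulVec_nonneg (fun b => (if b = i then (1:ℝ) else 0) - (if b = j then 1 else 0))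
  have hx : ∀ a, (X *ᵥ fun b => (if b = i then (1:ℝ) else 0) - (if b = j then 1 else 0)) a
      = X a i - X a j := by
    intro a
    simp [Matrix.mulVec, dotProduct, mul_sub, mul_ite, mul_one, mul_zero,
      Finset.sum_sub_distrib]
  rw [show (star fun b => (if b = i then (1:ℝ) else 0) - (if b = j then 1 else 0))
      = fun b => (if b = i then (1:ℝ) else 0) - (if b = j then 1 else 0) from rfl] at h
  simp only [dotProduct] at h
  simp only [hx, sub_mul, ite_mul, one_mul, zero_mul, mul_sub, Finset.sum_sub_distrib,
    Finset.sum_ite_eq', Finset.mem_univ, if_true] at h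
  linarith [h, hsym]

lemma frobSq_le_trace {n : ℕ} {X : Matrix (Fin n) (Fin n) ℝ}
    (hPSD : X.PosSemidef) (hnn : ∀ i j, 0 ≤ X i j) (hrow : ∀ i, ∑ j, X i j = 1) :
    frobSq X ≤ X.trace := by
  have hsym : ∀ i j, X j i = X i j := fun i j => by
    have := congrFun (congrFun hPSD.1 i) j
    simpa [Matrix.conjTranspose_apply] using this
  have key : ∀ i j, X i j ^ 2 ≤ (X i j * X i i + X i j * X j j) / 2 := fun i j => by
    nlinarith [hnn i j, psd_two_mul hPSD i j]
  have hcol : ∀ j, ∑ i, X i j = 1 := fun j => by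
    rw [← hrow j]
    exact Finset.sum_congr rfl fun i _ => hsym j i
  calc frobSq X ≤ ∑ i, ∑ j, (X i j * X i i + X i j * X j j) / 2 :=
        Finset.sum_le_sum fun i _ => Finset.sum_le_sum fun j _ => key i j
    _ = X.trace := by
        have e1 : ∑ i, ∑ j, X i j * X i i = X.trace := by
          refine Finset.sum_congr rfl fun i _ => ?_
          rw [← Finset.sum_mul, hrow i, one_mul]; rfl
        have e2 : ∑ i : Fin n, ∑ j, X i j * X j j = X.trace := by
          rw [Finset.sum_comm]
          refine Finset.sum_congr rfl fun j _ => ?_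
          rw [← Finset.sum_mul, hcol j, one_mul]; rfl
        simp only [← Finset.sum_div, Finset.sum_add_distrib]
        rw [e1, e2]; ring

section GT
variable {n r : ℕ} (z : Fin n → Fin r)

lemma gt_apply (i j : Fin n) :
    groundTruth z i j = if z i = z j then ((clusterSize z (z i) : ℝ))⁻¹ else 0 := rfl

lemma gt_symm (i j : Fin n) : groundTruth z j i = groundTruth z i j := by
  rw [gt_apply, gt_apply]
  by_cases h : z i = z j
  · rw [h]
  · rw [if_neg h, if_neg (fun hh : z j = z i => h hh.symm)]

/-- filtered row sum of groundTruth -/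
lemma gt_row_filter (hm : ∀ k, (0:ℝ) < clusterSize z k) (i : Fin n) :
    ∑ j ∈ Finset.univ.filter fun j => z j = z i, groundTruth z i j = 1 := by
  have e : ∀ j ∈ Finset.univ.filter fun j => z j = z i,
      groundTruth z i j = ((clusterSize z (z i) : ℝ))⁻¹ := by
    intro j hj
    rw [gt_apply, if_pos ((Finset.mem_filter.1 hj).2).symm]
  rw [Finset.sum_congr rfl e, Finset.sum_const]
  have hcard : (Finset.univ.filter fun j => z j = z i).card = clusterSize z (z i) := rfl
  rw [hcard, nsmul_eq_mul, mul_inv_cancel₀ (ne_of_gt (hm (z i)))]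

lemma gt_row (hm : ∀ k, (0:ℝ) < clusterSize z k) (i : Fin n) :
    ∑ j, groundTruth z i j = 1 := by
  have : ∀ j, groundTruth z i j
      = if z i = z j then ((clusterSize z (z i) : ℝ))⁻¹ else 0 := fun j => rfl
  rw [Finset.sum_congr rfl fun j _ => this j, sum_if_eq' z i]
  have e : ∀ j ∈ Finset.univ.filter fun j => z j = z i,
      ((clusterSize z (z i) : ℝ))⁻¹ = groundTruth z i j := by
    intro j hj
    rw [gt_apply, if_pos ((Finset.mem_filter.1 hj).2).symm]
  rw [Finset.sum_congr rfl e, gt_row_filter z hm i]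

lemma sum_inv_cs (hm : ∀ k, (0:ℝ) < clusterSize z k) :
    ∑ i, ((clusterSize z (z i) : ℝ))⁻¹ = (Fintype.card (Fin r) : ℝ) := by
  rw [← Finset.sum_fiberwise' Finset.univ z (fun k => ((clusterSize z k : ℝ))⁻¹)]
  have : ∀ k : Fin r, ∑ i ∈ Finset.univ.filter fun i => z i = k,
      ((clusterSize z k : ℝ))⁻¹ = 1 := by
    intro k
    rw [Finset.sum_const]
    have hcard : (Finset.univ.filter fun i => z i = k).card = clusterSize z k := rfl
    rw [hcard, nsmul_eq_mul, mul_inv_cancel₀ (ne_of_gt (hm k))]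
  rw [Finset.sum_congr rfl fun k _ => this k]
  simp

lemma ip_gt (A : Matrix (Fin n) (Fin n) ℝ) :
    ip A (groundTruth z) = ∑ k, ((clusterSize z k : ℝ))⁻¹ *
      ∑ i ∈ Finset.univ.filter fun i => z i = k,
        ∑ j ∈ Finset.univ.filter fun j => z j = k, A i j := by
  have inner : ∀ i, ∑ j, A i j * groundTruth z i j
      = ((clusterSize z (z i) : ℝ))⁻¹ *
        ∑ j ∈ Finset.univ.filter fun j => z j = z i, A i j := by
    intro i
    have e : ∀ j, A i j * groundTruth z i j
        = if z i = z j then A i j * ((clusterSize z (z i) : ℝ))⁻¹ else 0 := by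
      intro j
      rw [gt_apply]
      by_cases h : z i = z j
      · rw [if_pos h, if_pos h]
      · rw [if_neg h, if_neg h, mul_zero]
    rw [Finset.sum_congr rfl fun j _ => e j, sum_if_eq' z i, ← Finset.sum_mul, mul_comm]
  have step1 : ip A (groundTruth z)
      = ∑ i, ((clusterSize z (z i) : ℝ))⁻¹ *
        ∑ j ∈ Finset.univ.filter fun j => z j = z i, A i j :=
    Finset.sum_congr rfl fun i _ => inner i
  rw [step1, ← Finset.sum_fiberwise Finset.univ z]
  refine Finset.sum_congr rfl fun k _ => ?_
  rw [Finset.mul_sum]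
  refine Finset.sum_congr rfl fun i hi => ?_
  rw [(Finset.mem_filter.1 hi).2]

lemma gt_psd (hm : ∀ k, (0:ℝ) < clusterSize z k) : (groundTruth z).PosSemidef := by
  refine Matrix.PosSemidef.of_dotProduct_mulVec_nonneg ?_ ?_
  · ext i j
    simp only [Matrix.conjTranspose_apply, star_trivial]
    exact gt_symm z i j
  · intro x
    have hmv : ∀ i, (groundTruth z *ᵥ x) i
        = ((clusterSize z (z i) : ℝ))⁻¹ * ∑ j ∈ Finset.univ.filter fun j => z j = z i, x j := by
      intro i
      have e : ∀ j, groundTruth z i j * x j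
          = if z i = z j then ((clusterSize z (z i) : ℝ))⁻¹ * x j else 0 := by
        intro j
        rw [gt_apply]
        by_cases h : z i = z j
        · rw [if_pos h, if_pos h]
        · rw [if_neg h, if_neg h, zero_mul]
      show ∑ j, groundTruth z i j * x j = _
      rw [Finset.sum_congr rfl fun j _ => e j, sum_if_eq' z i, ← Finset.mul_sum]
    have e2 : star x ⬝ᵥ (groundTruth z *ᵥ x)
        = ∑ i, x i * (((clusterSize z (z i) : ℝ))⁻¹ *
          ∑ j ∈ Finset.univ.filter fun j => z j = z i, x j) := by
      simp only [dotProduct, star_trivial, Pi.star_apply]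
      exact Finset.sum_congr rfl fun i _ => by rw [hmv i]
    rw [e2, ← Finset.sum_fiberwise Finset.univ z]
    refine Finset.sum_nonneg fun k _ => ?_
    have e3 : ∀ i ∈ Finset.univ.filter fun i => z i = k,
        x i * (((clusterSize z (z i) : ℝ))⁻¹ *
          ∑ j ∈ Finset.univ.filter fun j => z j = z i, x j)
        = x i * (((clusterSize z k : ℝ))⁻¹ *
          ∑ j ∈ Finset.univ.filter fun j => z j = k, x j) := by
      intro i hi
      rw [(Finset.mem_filter.1 hi).2]
    rw [Finset.sum_congr rfl e3, ← Finset.sum_mul]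
    have h1 : (0:ℝ) ≤ ((clusterSize z k : ℝ))⁻¹ := inv_nonneg.2 (hm k).le
    nlinarith [sq_nonneg (∑ j ∈ Finset.univ.filter fun j => z j = k, x j)]

end GT


theorem sdp_reference_bound {n r : ℕ} [NeZero r] (z : Fin n → Fin r)
    (hz : Function.Surjective z)
    (M : Matrix (Fin n) (Fin n) ℝ) (hM : M.IsSymm)
    (XM : Matrix (Fin n) (Fin n) ℝ) (hfeas : feasSet z XM)
    (hopt : ∀ X, feasSet z X → ip M X ≤ ip M XM)
    (βin βout : Fin r → ℝ) (Q : Matrix (Fin n) (Fin n) ℝ)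
    (hQin : ∀ i j, z i = z j → Q i j = βin (z i))
    (hQout : ∀ i j, z i ≠ z j → 0 ≤ Q i j ∧ Q i j ≤ βout (z i))
    (hsep : 0 ≤ rMin fun k => βin k - βout k) :
    (mMin z : ℝ) * (rMin fun k => βin k - βout k) * frobSq (XM - groundTruth z)
      ≤ 2 * ip (M - Q) (XM - groundTruth z) := by
  classical
  obtain ⟨hPSD, hnn, hub, hrow, htr⟩ := hfeas
  -- basic cluster facts
  have hmN : ∀ k, 0 < clusterSize z k := fun k => by
    obtain ⟨i, hi⟩ := hz k
    exact Finset.card_pos.2 ⟨i, Finset.mem_filter.2 ⟨Finset.mem_univ i, hi⟩⟩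
  have hm : ∀ k, (0:ℝ) < clusterSize z k := fun k => by exact_mod_cast hmN k
  have hmin_le : ∀ k, (mMin z : ℝ) ≤ (clusterSize z k : ℝ) := fun k => by
    exact_mod_cast Finset.inf'_le _ (Finset.mem_univ k)
  have hmin_pos : (0:ℝ) < (mMin z : ℝ) := by
    have : 0 < mMin z := (Finset.lt_inf'_iff _).2 fun k _ => hmN k
    exact_mod_cast this
  have hδ_le : ∀ k, (rMin fun k => βin k - βout k) ≤ βin k - βout k := fun k =>
    Finset.inf'_le _ (Finset.mem_univ k)
  set X₀ := groundTruth z with hX₀def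
  set δ := rMin fun k => βin k - βout k with hδdef
  -- feasibility of X₀
  have hX0tr : X₀.trace = (r : ℝ) := by
    rw [Matrix.trace]
    have e : ∀ i : Fin n, X₀.diag i = ((clusterSize z (z i) : ℝ))⁻¹ := fun i => by
      show X₀ i i = _
      rw [hX₀def, gt_apply, if_pos rfl]
    rw [Finset.sum_congr rfl fun i _ => e i, sum_inv_cs z hm, Fintype.card_fin]
  have hX0feas : feasSet z X₀ := by
    refine ⟨gt_psd z hm, ?_, ?_, gt_row z hm, hX0tr⟩
    · intro i j
      rw [hX₀def, gt_apply]
      by_cases h : z i = z j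
      · rw [if_pos h]; exact inv_nonneg.2 (hm (z i)).le
      · rw [if_neg h]
    · intro i j
      rw [hX₀def, gt_apply]
      by_cases h : z i = z j
      · rw [if_pos h]; exact inv_anti₀ hmin_pos (hmin_le (z i))
      · rw [if_neg h]; exact inv_nonneg.2 hmin_pos.le
  -- notation
  let Cf : Fin r → Finset (Fin n) := fun k => Finset.univ.filter fun i => z i = k
  let T : Fin r → ℝ := fun k => ∑ i ∈ Cf k, ∑ j ∈ Cf k, XM i j
  let Ain : Fin n → ℝ := fun i => ∑ j ∈ Cf (z i), (XM i j - X₀ i j)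
  have hAin_eq : ∀ i, Ain i = (∑ j ∈ Cf (z i), XM i j) - 1 := fun i => by
    show ∑ j ∈ Cf (z i), (XM i j - X₀ i j) = _
    rw [Finset.sum_sub_distrib]
    have : ∑ j ∈ Cf (z i), X₀ i j = 1 := gt_row_filter z hm i
    rw [this]
  have hAin_nonpos : ∀ i, Ain i ≤ 0 := fun i => by
    rw [hAin_eq i]
    have h1 : ∑ j ∈ Cf (z i), XM i j ≤ ∑ j, XM i j :=
      Finset.sum_le_sum_of_subset_of_nonneg (Finset.filter_subset _ _)
        (fun j _ _ => hnn i j)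
    rw [hrow i] at h1
    linarith
  have hrowΔ : ∀ i, ∑ j, (XM i j - X₀ i j) = 0 := fun i => by
    rw [Finset.sum_sub_distrib, hrow i, gt_row z hm i, sub_self]
  have hout : ∀ i, ∑ j ∈ Finset.univ.filter fun j => ¬ z j = z i, (XM i j - X₀ i j)
      = - Ain i := fun i => by
    have h := Finset.sum_filter_add_sum_filter_not Finset.univ (fun j => z j = z i)
      (fun j => XM i j - X₀ i j)
    rw [hrowΔ i] at h
    have : Ain i = ∑ j ∈ Finset.univ.filter fun j => z j = z i, (XM i j - X₀ i j) := rfl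
    linarith [h, this]
  -- bound on ip Q Δ
  have hQrow : ∀ i, ∑ j, Q i j * (XM i j - X₀ i j) ≤ (βin (z i) - βout (z i)) * Ain i := by
    intro i
    rw [← Finset.sum_filter_add_sum_filter_not Finset.univ (fun j => z j = z i)
      (fun j => Q i j * (XM i j - X₀ i j))]
    have hin : ∑ j ∈ Finset.univ.filter fun j => z j = z i, Q i j * (XM i j - X₀ i j)
        = βin (z i) * Ain i := by
      have e : ∀ j ∈ Finset.univ.filter fun j => z j = z i,
          Q i j * (XM i j - X₀ i j) = βin (z i) * (XM i j - X₀ i j) := by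
        intro j hj
        rw [hQin i j ((Finset.mem_filter.1 hj).2).symm]
      rw [Finset.sum_congr rfl e, ← Finset.mul_sum]
    have hXo0 : ∀ j, ¬ z j = z i → X₀ i j = 0 := fun j h => by
      rw [hX₀def, gt_apply, if_neg (fun hh : z i = z j => h hh.symm)]
    have hout2 : ∑ j ∈ Finset.univ.filter fun j => ¬ z j = z i, Q i j * (XM i j - X₀ i j)
        ≤ βout (z i) * (- Ain i) := by
      have e : ∀ j ∈ Finset.univ.filter fun j => ¬ z j = z i,
          Q i j * (XM i j - X₀ i j) ≤ βout (z i) * (XM i j - X₀ i j) := by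
        intro j hj
        have hne : ¬ z j = z i := (Finset.mem_filter.1 hj).2
        have hd : 0 ≤ XM i j - X₀ i j := by
          rw [hXo0 j hne, sub_zero]; exact hnn i j
        exact mul_le_mul_of_nonneg_right
          ((hQout i j (fun hh => hne hh.symm)).2) hd
      calc ∑ j ∈ Finset.univ.filter fun j => ¬ z j = z i, Q i j * (XM i j - X₀ i j)
          ≤ ∑ j ∈ Finset.univ.filter fun j => ¬ z j = z i,
              βout (z i) * (XM i j - X₀ i j) := Finset.sum_le_sum e
        _ = βout (z i) * (- Ain i) := by rw [← Finset.mul_sum, hout i]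
    rw [hin]
    have : βin (z i) * Ain i + βout (z i) * (- Ain i)
        = (βin (z i) - βout (z i)) * Ain i := by ring
    linarith [hout2]
  have hQ : ip Q (XM - X₀) ≤ δ * ∑ i, Ain i := by
    have e0 : ip Q (XM - X₀) = ∑ i, ∑ j, Q i j * (XM i j - X₀ i j) := by
      simp only [ip, Matrix.sub_apply]
    rw [e0, Finset.mul_sum]
    refine Finset.sum_le_sum fun i _ => ?_
    calc ∑ j, Q i j * (XM i j - X₀ i j) ≤ (βin (z i) - βout (z i)) * Ain i := hQrow i
      _ ≤ δ * Ain i := mul_le_mul_of_nonpos_right (hδ_le (z i)) (hAin_nonpos i)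
  -- group Ain by clusters
  have hgroup : ∑ i, Ain i = ∑ k, (T k - (clusterSize z k : ℝ)) := by
    rw [← Finset.sum_fiberwise Finset.univ z Ain]
    refine Finset.sum_congr rfl fun k _ => ?_
    have e : ∀ i ∈ Cf k, Ain i = (∑ j ∈ Cf k, XM i j) - 1 := by
      intro i hi
      have hzi : z i = k := (Finset.mem_filter.1 hi).2
      rw [hAin_eq i, hzi]
    rw [Finset.sum_congr rfl e, Finset.sum_sub_distrib, Finset.sum_const]
    have hcard : (Cf k).card = clusterSize z k := rfl
    rw [hcard, nsmul_eq_mul, mul_one]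
  have hTk_le : ∀ k, T k ≤ (clusterSize z k : ℝ) := by
    intro k
    have e : ∀ i ∈ Cf k, ∑ j ∈ Cf k, XM i j ≤ 1 := by
      intro i _
      have h1 : ∑ j ∈ Cf k, XM i j ≤ ∑ j, XM i j :=
        Finset.sum_le_sum_of_subset_of_nonneg (Finset.filter_subset _ _)
          (fun j _ _ => hnn i j)
      rw [hrow i] at h1; exact h1
    calc T k ≤ ∑ i ∈ Cf k, (1:ℝ) := Finset.sum_le_sum e
      _ = (clusterSize z k : ℝ) := by
          rw [Finset.sum_const, nsmul_eq_mul, mul_one]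
          rfl
  -- Frobenius bound
  have hblock : ∀ k, ∑ i ∈ Cf k, ∑ j ∈ Cf k, X₀ i j = (clusterSize z k : ℝ) := by
    intro k
    have e : ∀ i ∈ Cf k, ∑ j ∈ Cf k, X₀ i j = 1 := by
      intro i hi
      have hzi : z i = k := (Finset.mem_filter.1 hi).2
      rw [← hzi]
      exact gt_row_filter z hm i
    rw [Finset.sum_congr rfl e, Finset.sum_const, nsmul_eq_mul, mul_one]
    rfl
  have hX0frob : frobSq X₀ = (r : ℝ) := by
    have e1 : frobSq X₀ = ip X₀ X₀ := by
      simp only [frobSq, ip, pow_two]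
    rw [e1, hX₀def, ip_gt z (groundTruth z)]
    have e2 : ∀ k : Fin r, ((clusterSize z k : ℝ))⁻¹ *
        ∑ i ∈ Finset.univ.filter fun i => z i = k,
          ∑ j ∈ Finset.univ.filter fun j => z j = k, groundTruth z i j = 1 := by
      intro k
      have := hblock k
      rw [hX₀def] at this
      rw [this, inv_mul_cancel₀ (ne_of_gt (hm k))]
    rw [Finset.sum_congr rfl fun k _ => e2 k]
    simp
  have hipXM : ip XM X₀ = ∑ k, ((clusterSize z k : ℝ))⁻¹ * T k := by
    rw [hX₀def, ip_gt z XM]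
  have hXMfrob : frobSq XM ≤ (r : ℝ) := by
    rw [← htr]; exact frobSq_le_trace hPSD hnn hrow
  have hexp : frobSq (XM - X₀) = frobSq XM - 2 * ip XM X₀ + frobSq X₀ := by
    simp only [frobSq, ip, Matrix.sub_apply, Finset.mul_sum, ← Finset.sum_sub_distrib,
      ← Finset.sum_add_distrib]
    exact Finset.sum_congr rfl fun i _ => Finset.sum_congr rfl fun j _ => by ring
  have hrsum : (r : ℝ) = ∑ _k : Fin r, (1:ℝ) := by simp
  have hfrob1 : frobSq (XM - X₀) ≤ 2 * ∑ k, ((clusterSize z k : ℝ))⁻¹ *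
      ((clusterSize z k : ℝ) - T k) := by
    have e : ∀ k : Fin r, ((clusterSize z k : ℝ))⁻¹ * ((clusterSize z k : ℝ) - T k)
        = 1 - ((clusterSize z k : ℝ))⁻¹ * T k := by
      intro k
      rw [mul_sub, inv_mul_cancel₀ (ne_of_gt (hm k))]
    rw [Finset.sum_congr rfl fun k _ => e k, Finset.sum_sub_distrib, ← hrsum]
    rw [hexp, hX0frob, hipXM]
    linarith [hXMfrob]
  have hfrob : (mMin z : ℝ) * frobSq (XM - X₀) ≤ 2 * ∑ k, ((clusterSize z k : ℝ) - T k) := by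
    have step : (mMin z : ℝ) * ∑ k, ((clusterSize z k : ℝ))⁻¹ *
        ((clusterSize z k : ℝ) - T k) ≤ ∑ k, ((clusterSize z k : ℝ) - T k) := by
      rw [Finset.mul_sum]
      refine Finset.sum_le_sum fun k _ => ?_
      have h1 : (mMin z : ℝ) * ((clusterSize z k : ℝ))⁻¹ ≤ 1 := by
        calc (mMin z : ℝ) * ((clusterSize z k : ℝ))⁻¹
            ≤ (clusterSize z k : ℝ) * ((clusterSize z k : ℝ))⁻¹ :=
              mul_le_mul_of_nonneg_right (hmin_le k) (inv_nonneg.2 (hm k).le)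
          _ = 1 := mul_inv_cancel₀ (ne_of_gt (hm k))
      have h2 : 0 ≤ (clusterSize z k : ℝ) - T k := sub_nonneg.2 (hTk_le k)
      calc (mMin z : ℝ) * (((clusterSize z k : ℝ))⁻¹ * ((clusterSize z k : ℝ) - T k))
          = ((mMin z : ℝ) * ((clusterSize z k : ℝ))⁻¹) * ((clusterSize z k : ℝ) - T k) := by
            ring
        _ ≤ ((clusterSize z k : ℝ) - T k) := mul_le_of_le_one_left h2 h1
    have h3 : (mMin z : ℝ) * frobSq (XM - X₀)
        ≤ (mMin z : ℝ) * (2 * ∑ k, ((clusterSize z k : ℝ))⁻¹ *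
          ((clusterSize z k : ℝ) - T k)) :=
      mul_le_mul_of_nonneg_left hfrob1 hmin_pos.le
    nlinarith [step, h3]
  -- linearity and conclusion
  have hipM : 0 ≤ ip M XM - ip M X₀ := sub_nonneg.2 (hopt X₀ hX0feas)
  have hiplin : ip (M - Q) (XM - X₀) = (ip M XM - ip M X₀) - ip Q (XM - X₀) := by
    simp only [ip, Matrix.sub_apply, sub_mul, mul_sub, Finset.sum_sub_distrib]
    ring
  set G := ∑ k, ((clusterSize z k : ℝ) - T k) with hGdef
  have hQ2 : ip Q (XM - X₀) ≤ -(δ * G) := by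
    have e1 : ∑ k, (T k - (clusterSize z k : ℝ)) = -G := by
      rw [hGdef, ← Finset.sum_neg_distrib]
      exact Finset.sum_congr rfl fun k _ => (neg_sub _ _).symm
    calc ip Q (XM - X₀) ≤ δ * ∑ i, Ain i := hQ
      _ = δ * (-G) := by rw [hgroup, e1]
      _ = -(δ * G) := by ring
  have h3 : δ * ((mMin z : ℝ) * frobSq (XM - X₀)) ≤ 2 * (δ * G) := by
    have := mul_le_mul_of_nonneg_left hfrob hsep
    nlinarith [this]
  calc (mMin z : ℝ) * δ * frobSq (XM - X₀)
      = δ * ((mMin z : ℝ) * frobSq (XM - X₀)) := by ring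
    _ ≤ 2 * (δ * G) := h3
    _ ≤ 2 * ip (M - Q) (XM - X₀) := by rw [hiplin]; linarith [hipM, hQ2]
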